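/- The boundary TSP functional is superadditive: if R_1 and R_2 are compact subsets of ℝ^d with disjoint interiors, then for any finite point set F, T_B(F, R_1 ∪ R_2) ≥ T_B(F, R_1) + T_B(F, R_2). -/

import Mathlib

open MeasureTheory Filter

noncomputable section

/-- The unit hypercube `Ω = [0,1]^d` in `ℝ^d`. -/
def unitCube (d : ℕ) : Set (EuclideanSpace ℝ (Fin d)) :=
  {x | ∀ i, x i ∈ Set.Icc (0 : ℝ) 1}

/-- The subcube `ω_k` (for `k : Fin d → Fin m`) of the partition of `[0,1]^d` into `m^d`
congruent subcubes of edge length `1/m` (half-open, except closed at the top face). -/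
def cell {d : ℕ} (m : ℕ) (k : Fin d → Fin m) : Set (EuclideanSpace ℝ (Fin d)) :=
  {x | ∀ i, x i ∈ (if (k i : ℕ) + 1 = m
      then Set.Icc ((k i : ℝ) / m) (((k i : ℝ) + 1) / m)
      else Set.Ico ((k i : ℝ) / m) (((k i : ℝ) + 1) / m))}

/-- Length of the polygonal path visiting the points of the list `l` in order,
for the distance function `ρ`. -/
def pathLen {E : Type*} (ρ : E → E → ℝ) (l : List E) : ℝ :=
  (List.zipWith ρ l l.tail).sum

/-- Length of the closed tour visiting the points of the list `l` in order and coming back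
to the starting point, for the distance function `ρ`. -/
def tourLen {E : Type*} (ρ : E → E → ℝ) (l : List E) : ℝ :=
  pathLen ρ (l ++ l.take 1)

/-- `l` enumerates the points of the set `F` (each exactly once). -/
def Enumerates {E : Type*} (l : List E) (F : Set E) : Prop :=
  l.Nodup ∧ ∀ z, z ∈ l ↔ z ∈ F

/-- `T F`: the length of the shortest Hamiltonian path through the (finite) set `F`,
i.e. the minimum over orderings of `F` of the sum of consecutive Euclidean distances. -/
def T {E : Type*} [PseudoMetricSpace E] (F : Set E) : ℝ :=
  sInf {L | ∃ l : List E, Enumerates l F ∧ pathLen dist l = L}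

/-- The pseudometric obtained from the Euclidean metric by identifying all points of the
boundary `∂R` of `R`: `d(a,b) = min(dist a b, dist(a,∂R) + dist(b,∂R))`. -/
def bdist {E : Type*} [PseudoMetricSpace E] (R : Set E) (a b : E) : ℝ :=
  min (dist a b) (Metric.infDist a (frontier R) + Metric.infDist b (frontier R))

/-- `TB F R`: the boundary TSP, i.e. the length of the shortest Hamiltonian tour through
`F ∩ R` for the pseudometric obtained from the Euclidean one by identifying the points of
the boundary `∂R` (travel along the boundary is free). -/
def TB {E : Type*} [PseudoMetricSpace E] (F R : Set E) : ℝ :=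
  sInf {L | ∃ l : List E, Enumerates l (F ∩ R) ∧ tourLen (bdist R) l = L}

/-- Cumulative length of the polygonal path through `l` up to its `(j+1)`-st point. -/
def cumLen {E : Type*} [PseudoMetricSpace E] (l : List E) (j : ℕ) : ℝ :=
  pathLen dist (l.take (j + 1))

/-- `γ` is the constant-speed parameterization, on `[0,1]`, of the polygonal curve joining
the consecutive points of `l`: it traverses the segment from `l[j]` to `l[j+1]` affinely on
the time interval `[cumLen l j / pathLen l, cumLen l (j+1) / pathLen l]`. -/
def IsConstSpeedParam {d : ℕ} (l : List (EuclideanSpace ℝ (Fin d)))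
    (γ : ℝ → EuclideanSpace ℝ (Fin d)) : Prop :=
  ∀ j : ℕ, ∀ h : j + 1 < l.length, ∀ u : ℝ, u ∈ Set.Icc (0 : ℝ) 1 →
    γ (((1 - u) * cumLen l j + u * cumLen l (j + 1)) / pathLen dist l)
      = (1 - u) • l[j]'(Nat.lt_of_succ_lt h) + u • l[j + 1]'h

/-- `restLen l γ B`: the one-dimensional length of the portion lying in `B` of the polygonal
curve through `l` parameterized at constant speed by `γ` on `[0,1]`; equivalently,
`pathLen l` times the time spent in `B`. -/
def restLen {d : ℕ} (l : List (EuclideanSpace ℝ (Fin d)))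
    (γ : ℝ → EuclideanSpace ℝ (Fin d)) (B : Set (EuclideanSpace ℝ (Fin d))) : ℝ :=
  pathLen dist l * (volume (γ ⁻¹' B ∩ Set.Icc (0 : ℝ) 1)).toReal

/-- The first `N` sample points `X_N = {x_1, …, x_N}` of the sequence `x` at sample `ω`. -/
def sampleSet {α Ω₀ : Type*} (x : ℕ → Ω₀ → α) (N : ℕ) (ω : Ω₀) : Set α :=
  (fun i => x i ω) '' Set.Iio N


namespace BTSPAux

open Metric Set

/-! ### List lemmas -/

section lists
variable {α : Type*}

lemma pathLen_nil (ρ : α → α → ℝ) : pathLen ρ [] = 0 := by simp [pathLen]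

lemma pathLen_single (ρ : α → α → ℝ) (x : α) : pathLen ρ [x] = 0 := by simp [pathLen]

lemma pathLen_cons_cons (ρ : α → α → ℝ) (x y : α) (t : List α) :
    pathLen ρ (x :: y :: t) = ρ x y + pathLen ρ (y :: t) := by
  simp [pathLen]

lemma pathLen_nonneg {ρ : α → α → ℝ} (h : ∀ a b, 0 ≤ ρ a b) :
    ∀ l : List α, 0 ≤ pathLen ρ l
  | [] => le_of_eq (pathLen_nil ρ).symm
  | [x] => le_of_eq (pathLen_single ρ x).symm
  | x :: y :: t => by
      rw [pathLen_cons_cons]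
      exact add_nonneg (h x y) (pathLen_nonneg h (y :: t))

lemma pathLen_add_le (ρ₁ ρ₂ ρ : α → α → ℝ) :
    ∀ l : List α, (∀ a ∈ l, ∀ b ∈ l, ρ₁ a b + ρ₂ a b ≤ ρ a b) →
      pathLen ρ₁ l + pathLen ρ₂ l ≤ pathLen ρ l
  | [], _ => by simp [pathLen_nil]
  | [x], _ => by simp [pathLen_single]
  | x :: y :: t, h => by
      have ih := pathLen_add_le ρ₁ ρ₂ ρ (y :: t) fun a ha b hb =>
        h a (List.mem_cons_of_mem _ ha) b (List.mem_cons_of_mem _ hb)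
      have h1 := h x (List.mem_cons_self) y
        (List.mem_cons_of_mem _ (List.mem_cons_self))
      rw [pathLen_cons_cons, pathLen_cons_cons, pathLen_cons_cons]
      linarith

lemma pathLen_congr {ρ₁ ρ₂ : α → α → ℝ} :
    ∀ l : List α, (∀ a ∈ l, ∀ b ∈ l, ρ₁ a b = ρ₂ a b) →
      pathLen ρ₁ l = pathLen ρ₂ l
  | [], _ => by simp [pathLen_nil]
  | [x], _ => by simp [pathLen_single]
  | x :: y :: t, h => by
      have ih := pathLen_congr (y :: t) fun a ha b hb =>
        h a (List.mem_cons_of_mem _ ha) b (List.mem_cons_of_mem _ hb)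
      rw [pathLen_cons_cons, pathLen_cons_cons, ih,
        h x (List.mem_cons_self) y (List.mem_cons_of_mem _ (List.mem_cons_self))]

variable {ρ : α → α → ℝ} (hnn : ∀ a b, 0 ≤ ρ a b) (htri : ∀ a b c, ρ a c ≤ ρ a b + ρ b c)
include hnn htri

lemma pathLen_cons_le (x a : α) :
    ∀ s : List α, pathLen ρ (x :: s) ≤ ρ x a + pathLen ρ (a :: s)
  | [] => by
      rw [pathLen_single, pathLen_single]
      simpa using hnn x a
  | b :: s' => by
      rw [pathLen_cons_cons, pathLen_cons_cons]
      have := htri x a b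
      linarith

lemma pathLen_filter_le (p : α → Bool) :
    ∀ (l : List α) (x y : α),
      pathLen ρ (x :: (l.filter p ++ [y])) ≤ pathLen ρ (x :: (l ++ [y]))
  | [], x, y => le_refl _
  | a :: t, x, y => by
      by_cases hp : p a
      · rw [List.filter_cons_of_pos hp, List.cons_append, List.cons_append,
          pathLen_cons_cons, pathLen_cons_cons]
        exact (add_le_add_iff_left _).mpr (pathLen_filter_le p t a y)
      · rw [List.filter_cons_of_neg (by simpa using hp), List.cons_append, pathLen_cons_cons]
        calc pathLen ρ (x :: (t.filter p ++ [y])) ≤ pathLen ρ (x :: (t ++ [y])) :=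
              pathLen_filter_le p t x y
          _ ≤ ρ x a + pathLen ρ (a :: (t ++ [y])) := pathLen_cons_le hnn htri x a _

lemma pathLen_last_le (h a : α) :
    ∀ (s : List α) (x : α),
      pathLen ρ (x :: (s ++ [a])) ≤ pathLen ρ (x :: (s ++ [h])) + ρ h a
  | [], x => by
      simp only [List.nil_append, pathLen_cons_cons, pathLen_single]
      have := htri x h a
      linarith
  | b :: s', x => by
      simp only [List.cons_append, pathLen_cons_cons]
      have := pathLen_last_le h a s' b
      linarith

lemma tourLen_filter_le (p : α → Bool) (l : List α) :
    tourLen ρ (l.filter p) ≤ tourLen ρ l := by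
  cases l with
  | nil => simp [tourLen]
  | cons h t =>
      have htour : tourLen ρ (h :: t) = pathLen ρ (h :: (t ++ [h])) := by
        simp [tourLen]
      by_cases hp : p h
      · rw [List.filter_cons_of_pos hp, htour]
        have : tourLen ρ (h :: t.filter p) = pathLen ρ (h :: (t.filter p ++ [h])) := by
          simp [tourLen]
        rw [this]
        exact pathLen_filter_le hnn htri p t h h
      · rw [List.filter_cons_of_neg (by simpa using hp)]
        rcases hft : t.filter p with _ | ⟨a, ft'⟩
        · rw [htour]
          simp only [tourLen, List.take_nil, List.append_nil, pathLen_nil]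
          exact pathLen_nonneg hnn _
        · have h1 : tourLen ρ (a :: ft') = pathLen ρ (a :: (ft' ++ [a])) := by
            simp [tourLen]
          rw [h1, htour]
          calc pathLen ρ (a :: (ft' ++ [a]))
              ≤ pathLen ρ (a :: (ft' ++ [h])) + ρ h a := pathLen_last_le hnn htri h a ft' a
            _ = pathLen ρ (h :: (a :: (ft' ++ [h]))) := by rw [pathLen_cons_cons]; ring
            _ = pathLen ρ (h :: (t.filter p ++ [h])) := by rw [hft]; simp
            _ ≤ pathLen ρ (h :: (t ++ [h])) := pathLen_filter_le hnn htri p t h h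

lemma tourLen_nonneg (l : List α) : 0 ≤ tourLen ρ l := pathLen_nonneg hnn _

omit htri

lemma tourLen_add_le (ρ₁ ρ₂ : α → α → ℝ) (l : List α)
    (h : ∀ a ∈ l, ∀ b ∈ l, ρ₁ a b + ρ₂ a b ≤ ρ a b) :
    tourLen ρ₁ l + tourLen ρ₂ l ≤ tourLen ρ l :=
  pathLen_add_le ρ₁ ρ₂ ρ _ fun a ha b hb =>
    h a (by rcases List.mem_append.mp ha with h' | h'; exact h'; exact List.take_subset _ _ h')
      b (by rcases List.mem_append.mp hb with h' | h'; exact h'; exact List.take_subset _ _ h')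

omit hnn

lemma tourLen_congr {ρ₁ ρ₂ : α → α → ℝ} (l : List α)
    (h : ∀ a ∈ l, ∀ b ∈ l, ρ₁ a b = ρ₂ a b) : tourLen ρ₁ l = tourLen ρ₂ l :=
  pathLen_congr _ fun a ha b hb =>
    h a (by rcases List.mem_append.mp ha with h' | h'; exact h'; exact List.take_subset _ _ h')
      b (by rcases List.mem_append.mp hb with h' | h'; exact h'; exact List.take_subset _ _ h')

end lists

/-! ### bdist and qdist -/

section bdist
variable {E : Type*} [PseudoMetricSpace E] {R : Set E} {a b c x y z : E}

lemma bdist_nonneg (R : Set E) (a b : E) : 0 ≤ bdist R a b :=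
  le_min dist_nonneg (add_nonneg infDist_nonneg infDist_nonneg)

lemma bdist_le_dist (R : Set E) (a b : E) : bdist R a b ≤ dist a b := min_le_left _ _

lemma bdist_le_add (R : Set E) (a b : E) :
    bdist R a b ≤ infDist a (frontier R) + infDist b (frontier R) := min_le_right _ _

lemma bdist_triangle (R : Set E) (a b c : E) :
    bdist R a c ≤ bdist R a b + bdist R b c := by
  have hd := dist_triangle a b c
  have h1 : infDist a (frontier R) ≤ infDist b (frontier R) + dist a b :=
    infDist_le_infDist_add_dist
  have h2 : infDist c (frontier R) ≤ infDist b (frontier R) + dist c b :=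
    infDist_le_infDist_add_dist
  have hcb : dist c b = dist b c := dist_comm c b
  have hb0 : 0 ≤ infDist b (frontier R) := infDist_nonneg
  rcases min_cases (dist a b) (infDist a (frontier R) + infDist b (frontier R)) with
    ⟨e1, _⟩ | ⟨e1, _⟩ <;>
    rcases min_cases (dist b c) (infDist b (frontier R) + infDist c (frontier R)) with
      ⟨e2, _⟩ | ⟨e2, _⟩ <;>
    unfold bdist <;> rw [e1, e2] <;>
    first
      | exact min_le_of_left_le (by linarith)
      | exact min_le_of_right_le (by linarith)

open Classical in
/-- Extension of the boundary pseudometric of `R` to the whole space: points outside `R`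
are treated as lying on the (collapsed) boundary. -/
def qdist (R : Set E) (x y : E) : ℝ :=
  if x ∈ R then (if y ∈ R then bdist R x y else infDist x (frontier R))
  else (if y ∈ R then infDist y (frontier R) else 0)

lemma qdist_nonneg (R : Set E) (x y : E) : 0 ≤ qdist R x y := by
  unfold qdist
  split_ifs <;> first | exact bdist_nonneg R x y | exact infDist_nonneg | exact le_refl 0

lemma qdist_eq_bdist (hx : x ∈ R) (hy : y ∈ R) : qdist R x y = bdist R x y := by
  simp [qdist, hx, hy]

lemma qdist_triangle (R : Set E) (x y z : E) :
    qdist R x z ≤ qdist R x y + qdist R y z := by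
  have h1 : infDist x (frontier R) ≤ infDist y (frontier R) + dist x y :=
    infDist_le_infDist_add_dist
  have h2 : infDist z (frontier R) ≤ infDist y (frontier R) + dist z y :=
    infDist_le_infDist_add_dist
  have hx0 : 0 ≤ infDist x (frontier R) := infDist_nonneg
  have hy0 : 0 ≤ infDist y (frontier R) := infDist_nonneg
  have hz0 : 0 ≤ infDist z (frontier R) := infDist_nonneg
  have hzy : dist z y = dist y z := dist_comm z y
  by_cases hx : x ∈ R <;> by_cases hy : y ∈ R <;> by_cases hz : z ∈ R <;>
    simp only [qdist, hx, hy, hz, if_true, if_false]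
  · exact bdist_triangle R x y z
  · -- x ∈ R, y ∈ R, z ∉ R : infDist x ≤ bdist R x y + infDist y
    rcases min_cases (dist x y) (infDist x (frontier R) + infDist y (frontier R)) with
      ⟨e1, _⟩ | ⟨e1, _⟩ <;> unfold bdist <;> rw [e1] <;> linarith
  · exact bdist_le_add R x z
  · linarith
  · -- x ∉ R, y ∈ R, z ∈ R : infDist z ≤ infDist y + bdist R y z
    rcases min_cases (dist y z) (infDist y (frontier R) + infDist z (frontier R)) with
      ⟨e1, _⟩ | ⟨e1, _⟩ <;> unfold bdist <;> rw [e1] <;> linarith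
  · linarith
  · linarith
  · linarith

end bdist

section geometry
variable {α : Type*} [TopologicalSpace α]

lemma preconnected_inter_frontier {s t : Set α} (hs : IsPreconnected s)
    (h1 : (s ∩ t).Nonempty) (h2 : (s \ t).Nonempty) : (s ∩ frontier t).Nonempty := by
  rw [Set.nonempty_iff_ne_empty]
  intro h
  have hsub : s ⊆ interior t ∪ (closure t)ᶜ := by
    intro w hw
    by_cases hi : w ∈ interior t
    · exact Or.inl hi
    · refine Or.inr fun hcl => ?_
      exact Set.eq_empty_iff_forall_notMem.mp h w ⟨hw, hcl, hi⟩
  have hdisj : Disjoint (interior t) (closure t)ᶜ :=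
    Set.disjoint_left.mpr fun a ha hac => hac (subset_closure (interior_subset ha))
  rcases IsPreconnected.subset_or_subset isOpen_interior isClosed_closure.isOpen_compl
      hdisj hsub hs with hss | hss
  · obtain ⟨w, hw1, hw2⟩ := h2
    exact hw2 (interior_subset (hss hw1))
  · obtain ⟨w, hw1, hw2⟩ := h1
    exact hss hw1 (subset_closure hw2)

end geometry

section normed
variable {E : Type*} [NormedAddCommGroup E] [NormedSpace ℝ E] {R R₁ R₂ U : Set E} {x y : E}

lemma ball_subset_interior (hx : x ∈ R) :
    ball x (infDist x (frontier R)) ⊆ interior R := by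
  set r := infDist x (frontier R) with hr
  rcases le_or_gt r 0 with h | hrpos
  · rw [ball_eq_empty.mpr h]; exact Set.empty_subset _
  have hfr : ∀ w ∈ ball x r, w ∉ frontier R := by
    intro w hw hwf
    have h1 : r ≤ dist x w := infDist_le_dist_of_mem hwf
    rw [mem_ball, dist_comm] at hw
    linarith
  have hsub : ball x r ⊆ R := by
    by_contra hns
    obtain ⟨w, hw1, hw2⟩ := Set.not_subset.mp hns
    obtain ⟨q, hq1, hq2⟩ := preconnected_inter_frontier (convex_ball x r).isPreconnected
      ⟨x, mem_ball_self hrpos, hx⟩ ⟨w, hw1, hw2⟩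
    exact hfr q hq1 hq2
  exact interior_maximal hsub isOpen_ball

/-- Key disjointness estimate: the inner radii of two sets with disjoint interiors
are separated. -/
lemma infDist_add_infDist_le (hdisj : Disjoint (interior R₁) (interior R₂))
    (hx : x ∈ R₁) (hy : y ∈ R₂) (hx2 : x ∉ interior R₂) (hy1 : y ∉ interior R₁) :
    infDist x (frontier R₁) + infDist y (frontier R₂) ≤ dist x y := by
  set r := infDist x (frontier R₁) with hrdef
  set s := infDist y (frontier R₂) with hsdef
  have hr0 : 0 ≤ r := infDist_nonneg
  have hs0 : 0 ≤ s := infDist_nonneg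
  have hbx : ball x r ⊆ interior R₁ := ball_subset_interior hx
  have hby : ball y s ⊆ interior R₂ := ball_subset_interior hy
  by_contra hlt
  push_neg at hlt
  rcases lt_or_ge (dist x y) s with h | hsle
  · exact hx2 (hby (mem_ball.mpr h))
  rcases lt_or_ge (dist x y) r with h | hrle
  · exact hy1 (hbx (mem_ball.mpr (by rwa [dist_comm])))
  have hrpos : 0 < r := by linarith
  have hdpos : 0 < dist x y := lt_of_lt_of_le hrpos hrle
  set c : ℝ := (dist x y - s + r) / (2 * dist x y) with hc
  have hnum : 0 < dist x y - s + r := by linarith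
  have hden : 0 < 2 * dist x y := by linarith
  have hcpos : 0 < c := div_pos hnum hden
  have hct : c * dist x y = (dist x y - s + r) / 2 := by
    rw [hc]; field_simp
  set z : E := x + c • (y - x) with hz
  have hzx : dist z x = c * dist x y := by
    rw [hz, dist_eq_norm, add_sub_cancel_left, norm_smul, Real.norm_eq_abs,
      abs_of_nonneg hcpos.le, ← dist_eq_norm, dist_comm]
  have hzy : dist z y = (1 - c) * dist x y := by
    have hzy' : z - y = (1 - c) • (x - y) := by
      rw [hz]; module
    have hc1 : c ≤ 1 := by
      rw [hc, div_le_one (by linarith)]; linarith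
    rw [dist_eq_norm, hzy', norm_smul, Real.norm_eq_abs, abs_of_nonneg (by linarith),
      ← dist_eq_norm]
  have hz1 : z ∈ interior R₁ := by
    apply hbx
    rw [mem_ball, hzx, hct]
    linarith
  have hz2 : z ∈ interior R₂ := by
    apply hby
    have hexp : (1 - c) * dist x y = dist x y - c * dist x y := by ring
    rw [mem_ball, hzy, hexp, hct]
    linarith
  exact Set.disjoint_left.mp hdisj hz1 hz2

lemma infDist_frontier_le (hU : IsCompact U) (hRU : R ⊆ U) (hx : x ∈ R) :
    infDist x (frontier R) ≤ infDist x (frontier U) := by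
  rcases (frontier U).eq_empty_or_nonempty with hfe | hfne
  · rw [frontier_eq_empty_iff] at hfe
    rcases hfe with rfl | hU'
    · exact absurd (hRU hx) (Set.notMem_empty x)
    · rcases subsingleton_or_nontrivial E with hsub | hnt
      · have hRuniv : R = Set.univ :=
          Set.eq_univ_of_forall fun w => (Subsingleton.elim x w) ▸ hx
        rw [hRuniv, frontier_univ, infDist_empty]
        exact infDist_nonneg
      · exact absurd (isCompact_univ_iff.mp (hU' ▸ hU))
          (not_compactSpace_iff.mpr inferInstance)
  · by_contra hlt
    push_neg at hlt
    obtain ⟨p, hpU, hpd⟩ := (infDist_lt_iff hfne).mp hlt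
    have key : infDist x (frontier R) ≤ dist x p := by
      by_cases hpR : p ∈ R
      · have hpf : p ∈ frontier R :=
          ⟨subset_closure hpR, fun hi => hpU.2 (interior_mono hRU hi)⟩
        exact infDist_le_dist_of_mem hpf
      · obtain ⟨q, hq1, hq2⟩ := preconnected_inter_frontier
          (convex_segment x p).isPreconnected
          ⟨x, left_mem_segment ℝ x p, hx⟩ ⟨p, right_mem_segment ℝ x p, hpR⟩
        have h1 : dist x q + dist q p = dist x p := dist_add_dist_of_mem_segment hq1
        have h2 : infDist x (frontier R) ≤ dist x q := infDist_le_dist_of_mem hq2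
        have h3 : (0:ℝ) ≤ dist q p := dist_nonneg
        linarith
    linarith

lemma mem_frontier_or (hdisj : Disjoint (interior R₁) (interior R₂))
    (h1 : x ∈ R₁) (h2 : x ∈ R₂) : x ∈ frontier R₁ ∨ x ∈ frontier R₂ := by
  by_cases h : x ∈ interior R₁
  · exact Or.inr ⟨subset_closure h2, fun hi => Set.disjoint_left.mp hdisj h hi⟩
  · exact Or.inl ⟨subset_closure h1, h⟩

/-- The key pointwise superadditivity estimate. -/
lemma qdist_add_qdist_le (hU : IsCompact (R₁ ∪ R₂))
    (hdisj : Disjoint (interior R₁) (interior R₂))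
    (hx : x ∈ R₁ ∪ R₂) (hy : y ∈ R₁ ∪ R₂) :
    qdist R₁ x y + qdist R₂ x y ≤ bdist (R₁ ∪ R₂) x y := by
  classical
  have hK1 : ∀ z ∈ R₁, infDist z (frontier R₁) ≤ infDist z (frontier (R₁ ∪ R₂)) :=
    fun z hz => infDist_frontier_le hU Set.subset_union_left hz
  have hK2 : ∀ z ∈ R₂, infDist z (frontier R₂) ≤ infDist z (frontier (R₁ ∪ R₂)) :=
    fun z hz => infDist_frontier_le hU Set.subset_union_right hz
  refine le_min ?_ ?_
  · -- ≤ dist x y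
    have hfront1 : ∀ z, z ∈ frontier R₁ → infDist z (frontier R₁) = 0 ∧ z ∉ interior R₁ :=
      fun z hz => ⟨infDist_zero_of_mem hz, hz.2⟩
    have hfront2 : ∀ z, z ∈ frontier R₂ → infDist z (frontier R₂) = 0 ∧ z ∉ interior R₂ :=
      fun z hz => ⟨infDist_zero_of_mem hz, hz.2⟩
    have hKxy : ∀ z w, z ∈ R₁ → w ∈ R₂ → z ∉ interior R₂ → w ∉ interior R₁ →
        infDist z (frontier R₁) + infDist w (frontier R₂) ≤ dist z w :=
      fun z w hz hw hz2 hw1 => infDist_add_infDist_le hdisj hz hw hz2 hw1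
    have hdxy : dist y x = dist x y := dist_comm y x
    have hble1 : bdist R₁ x y ≤ dist x y := bdist_le_dist R₁ x y
    have hble2 : bdist R₂ x y ≤ dist x y := bdist_le_dist R₂ x y
    have hbadd1 : bdist R₁ x y ≤ infDist x (frontier R₁) + infDist y (frontier R₁) :=
      bdist_le_add R₁ x y
    have hbadd2 : bdist R₂ x y ≤ infDist x (frontier R₂) + infDist y (frontier R₂) :=
      bdist_le_add R₂ x y
    have hb1nn : 0 ≤ bdist R₁ x y := bdist_nonneg R₁ x y
    have hb2nn : 0 ≤ bdist R₂ x y := bdist_nonneg R₂ x y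
    have hfx1 : 0 ≤ infDist x (frontier R₁) := infDist_nonneg
    have hfx2 : 0 ≤ infDist x (frontier R₂) := infDist_nonneg
    have hfy1 : 0 ≤ infDist y (frontier R₁) := infDist_nonneg
    have hfy2 : 0 ≤ infDist y (frontier R₂) := infDist_nonneg
    by_cases hx1 : x ∈ R₁ <;> by_cases hx2 : x ∈ R₂ <;>
      by_cases hy1 : y ∈ R₁ <;> by_cases hy2 : y ∈ R₂ <;>
      simp only [qdist, hx1, hx2, hy1, hy2, if_true, if_false]
    · -- x both, y both
      rcases mem_frontier_or hdisj hx1 hx2 with hxf | hxf <;>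
        rcases mem_frontier_or hdisj hy1 hy2 with hyf | hyf
      · obtain ⟨e1, _⟩ := hfront1 x hxf; obtain ⟨e2, _⟩ := hfront1 y hyf
        linarith
      · obtain ⟨e1, i1⟩ := hfront1 x hxf; obtain ⟨e2, i2⟩ := hfront2 y hyf
        have := hKxy y x hy1 hx2 i2 i1
        linarith
      · obtain ⟨e1, i1⟩ := hfront2 x hxf; obtain ⟨e2, i2⟩ := hfront1 y hyf
        have := hKxy x y hx1 hy2 i1 i2
        linarith
      · obtain ⟨e1, _⟩ := hfront2 x hxf; obtain ⟨e2, _⟩ := hfront2 y hyf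
        linarith
    · -- x both, y ∈ R₁ only
      rcases mem_frontier_or hdisj hx1 hx2 with hxf | hxf
      · obtain ⟨e1, i1⟩ := hfront1 x hxf
        have := hKxy y x hy1 hx2 (fun h => hy2 (interior_subset h)) i1
        linarith
      · obtain ⟨e1, _⟩ := hfront2 x hxf
        linarith
    · -- x both, y ∈ R₂ only
      rcases mem_frontier_or hdisj hx1 hx2 with hxf | hxf
      · obtain ⟨e1, _⟩ := hfront1 x hxf
        linarith
      · obtain ⟨e1, i1⟩ := hfront2 x hxf
        have := hKxy x y hx1 hy2 i1 (fun h => hy1 (interior_subset h))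
        linarith
    · -- x both, y in neither : impossible
      exact absurd hy (by simp [hy1, hy2])
    · -- x ∈ R₁ only, y both
      rcases mem_frontier_or hdisj hy1 hy2 with hyf | hyf
      · obtain ⟨e1, i1⟩ := hfront1 y hyf
        have := hKxy x y hx1 hy2 (fun h => hx2 (interior_subset h)) i1
        linarith
      · obtain ⟨e1, _⟩ := hfront2 y hyf
        linarith
    · -- x ∈ R₁ only, y ∈ R₁ only
      linarith
    · -- x ∈ R₁ only, y ∈ R₂ only
      have := hKxy x y hx1 hy2 (fun h => hx2 (interior_subset h))
        (fun h => hy1 (interior_subset h))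
      linarith
    · exact absurd hy (by simp [hy1, hy2])
    · -- x ∈ R₂ only, y both
      rcases mem_frontier_or hdisj hy1 hy2 with hyf | hyf
      · obtain ⟨e1, _⟩ := hfront1 y hyf
        linarith
      · obtain ⟨e1, i1⟩ := hfront2 y hyf
        have := hKxy y x hy1 hx2 i1 (fun h => hx1 (interior_subset h))
        linarith
    · -- x ∈ R₂ only, y ∈ R₁ only
      have := hKxy y x hy1 hx2 (fun h => hy2 (interior_subset h))
        (fun h => hx1 (interior_subset h))
      linarith
    · -- x ∈ R₂ only, y ∈ R₂ only
      linarith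
    · exact absurd hy (by simp [hy1, hy2])
    · exact absurd hx (by simp [hx1, hx2])
    · exact absurd hx (by simp [hx1, hx2])
    · exact absurd hx (by simp [hx1, hx2])
    · exact absurd hx (by simp [hx1, hx2])
  · -- ≤ infDist x ∂U + infDist y ∂U
    have hg : ∀ (R : Set E) (a b : E),
        qdist R a b ≤ (if a ∈ R then infDist a (frontier R) else 0) +
          (if b ∈ R then infDist b (frontier R) else 0) := by
      intro R a b
      by_cases ha : a ∈ R <;> by_cases hb : b ∈ R <;>
        simp only [qdist, ha, hb, if_true, if_false]
      · exact bdist_le_add R a b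
      · simp
      · simp
      · simp
    have hgU : ∀ z ∈ R₁ ∪ R₂,
        (if z ∈ R₁ then infDist z (frontier R₁) else 0) +
          (if z ∈ R₂ then infDist z (frontier R₂) else 0) ≤
          infDist z (frontier (R₁ ∪ R₂)) := by
      intro z hz
      by_cases hz1 : z ∈ R₁ <;> by_cases hz2 : z ∈ R₂ <;>
        simp only [hz1, hz2, if_true, if_false]
      · rcases mem_frontier_or hdisj hz1 hz2 with hzf | hzf
        · rw [infDist_zero_of_mem hzf]
          have := hK2 z hz2
          linarith
        · rw [infDist_zero_of_mem hzf]
          have := hK1 z hz1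
          linarith
      · simpa using hK1 z hz1
      · simpa using hK2 z hz2
      · exact absurd hz (by simp [hz1, hz2])
    have g1 := hg R₁ x y
    have g2 := hg R₂ x y
    have u1 := hgU x hx
    have u2 := hgU y hy
    calc qdist R₁ x y + qdist R₂ x y
        ≤ ((if x ∈ R₁ then infDist x (frontier R₁) else 0) +
            (if x ∈ R₂ then infDist x (frontier R₂) else 0)) +
          ((if y ∈ R₁ then infDist y (frontier R₁) else 0) +
            (if y ∈ R₂ then infDist y (frontier R₂) else 0)) := by linarith
      _ ≤ infDist x (frontier (R₁ ∪ R₂)) + infDist y (frontier (R₁ ∪ R₂)) :=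
          add_le_add u1 u2

end normed

end BTSPAux

/-- The boundary TSP functional is superadditive: if `R₁` and `R₂` are compact subsets of
`ℝ^d` with disjoint interiors, then for any finite point set `F`,
`T_B(F, R₁ ∪ R₂) ≥ T_B(F, R₁) + T_B(F, R₂)`. -/
theorem boundaryTSP_superadditive {d : ℕ}
    (R₁ R₂ : Set (EuclideanSpace ℝ (Fin d)))
    (hR₁ : IsCompact R₁) (hR₂ : IsCompact R₂)
    (hdisj : Disjoint (interior R₁) (interior R₂))
    (F : Set (EuclideanSpace ℝ (Fin d))) (hF : F.Finite) :
    TB F R₁ + TB F R₂ ≤ TB F (R₁ ∪ R₂) := by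
  classical
  have hU : IsCompact (R₁ ∪ R₂) := hR₁.union hR₂
  have hFU : (F ∩ (R₁ ∪ R₂)).Finite := hF.inter_of_left _
  have hSU : {L | ∃ l, Enumerates l (F ∩ (R₁ ∪ R₂)) ∧
      tourLen (bdist (R₁ ∪ R₂)) l = L}.Nonempty := by
    refine ⟨tourLen (bdist (R₁ ∪ R₂)) hFU.toFinset.toList,
      hFU.toFinset.toList, ⟨Finset.nodup_toList _, fun z => ?_⟩, rfl⟩
    rw [Finset.mem_toList, Set.Finite.mem_toFinset]
  unfold TB
  refine le_csInf hSU ?_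
  rintro L ⟨l, ⟨hnd, hmem⟩, rfl⟩
  have hmemU : ∀ a ∈ l, a ∈ R₁ ∪ R₂ := fun a ha => ((hmem a).mp ha).2
  have bd1 : BddBelow {L | ∃ l', Enumerates l' (F ∩ R₁) ∧ tourLen (bdist R₁) l' = L} := by
    refine ⟨0, ?_⟩
    rintro L' ⟨l', _, rfl⟩
    exact BTSPAux.tourLen_nonneg (BTSPAux.bdist_nonneg R₁)
      (BTSPAux.bdist_triangle R₁) l'
  have bd2 : BddBelow {L | ∃ l', Enumerates l' (F ∩ R₂) ∧ tourLen (bdist R₂) l' = L} := by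
    refine ⟨0, ?_⟩
    rintro L' ⟨l', _, rfl⟩
    exact BTSPAux.tourLen_nonneg (BTSPAux.bdist_nonneg R₂)
      (BTSPAux.bdist_triangle R₂) l'
  have hmem₁ : ∀ z, z ∈ l.filter (fun z => decide (z ∈ R₁)) ↔ z ∈ F ∩ R₁ := by
    intro z
    rw [List.mem_filter]
    simp only [decide_eq_true_eq]
    constructor
    · rintro ⟨hzl, hz1⟩; exact ⟨((hmem z).mp hzl).1, hz1⟩
    · rintro ⟨hzF, hz1⟩; exact ⟨(hmem z).mpr ⟨hzF, Or.inl hz1⟩, hz1⟩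
  have hmem₂ : ∀ z, z ∈ l.filter (fun z => decide (z ∈ R₂)) ↔ z ∈ F ∩ R₂ := by
    intro z
    rw [List.mem_filter]
    simp only [decide_eq_true_eq]
    constructor
    · rintro ⟨hzl, hz1⟩; exact ⟨((hmem z).mp hzl).1, hz1⟩
    · rintro ⟨hzF, hz1⟩; exact ⟨(hmem z).mpr ⟨hzF, Or.inr hz1⟩, hz1⟩
  have hTB₁ : TB F R₁ ≤ tourLen (bdist R₁) (l.filter (fun z => decide (z ∈ R₁))) :=
    csInf_le bd1 ⟨_, ⟨hnd.filter _, hmem₁⟩, rfl⟩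
  have hTB₂ : TB F R₂ ≤ tourLen (bdist R₂) (l.filter (fun z => decide (z ∈ R₂))) :=
    csInf_le bd2 ⟨_, ⟨hnd.filter _, hmem₂⟩, rfl⟩
  have e1 : tourLen (bdist R₁) (l.filter (fun z => decide (z ∈ R₁)))
      = tourLen (BTSPAux.qdist R₁) (l.filter (fun z => decide (z ∈ R₁))) :=
    BTSPAux.tourLen_congr _ fun a ha b hb =>
      (BTSPAux.qdist_eq_bdist (((hmem₁ a).mp ha).2) (((hmem₁ b).mp hb).2)).symm
  have e2 : tourLen (BTSPAux.qdist R₁) (l.filter (fun z => decide (z ∈ R₁)))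
      ≤ tourLen (BTSPAux.qdist R₁) l :=
    BTSPAux.tourLen_filter_le (BTSPAux.qdist_nonneg R₁) (BTSPAux.qdist_triangle R₁) _ l
  have e3 : tourLen (bdist R₂) (l.filter (fun z => decide (z ∈ R₂)))
      = tourLen (BTSPAux.qdist R₂) (l.filter (fun z => decide (z ∈ R₂))) :=
    BTSPAux.tourLen_congr _ fun a ha b hb =>
      (BTSPAux.qdist_eq_bdist (((hmem₂ a).mp ha).2) (((hmem₂ b).mp hb).2)).symm
  have e4 : tourLen (BTSPAux.qdist R₂) (l.filter (fun z => decide (z ∈ R₂)))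
      ≤ tourLen (BTSPAux.qdist R₂) l :=
    BTSPAux.tourLen_filter_le (BTSPAux.qdist_nonneg R₂) (BTSPAux.qdist_triangle R₂) _ l
  have e5 : tourLen (BTSPAux.qdist R₁) l + tourLen (BTSPAux.qdist R₂) l
      ≤ tourLen (bdist (R₁ ∪ R₂)) l :=
    BTSPAux.tourLen_add_le (BTSPAux.bdist_nonneg (R₁ ∪ R₂)) (BTSPAux.qdist R₁)
      (BTSPAux.qdist R₂) l fun a ha b hb =>
        BTSPAux.qdist_add_qdist_le hU hdisj (hmemU a ha) (hmemU b hb)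
  unfold TB at hTB₁ hTB₂
  linarith

end
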